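/- Let n ≥ 1 and let (Ω, μ) be a probability space. Let y : Ω → ℝⁿ be a random vector and let P : ℝⁿ → ℝⁿ be a map such that for every v ∈ ℝⁿ, P v ∈ K_n and ‖v − P v‖ ≤ ‖v − w‖ for all w ∈ K_n. Let U : ℝ → ℝ be nondecreasing, and assume ω ↦ U((y ω) 1) and ω ↦ U((P (y ω)) 1) are integrable. Then ∫ U((P (y ω)) 1) dμ(ω) ≥ ∫ U((y ω) 1) dμ(ω): when the quota is one, the expected utility of the isotonically adjusted top score is at least the expected utility of the raw top score. -/

import Mathlib

open MeasureTheory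

noncomputable section

/-- The monotone (isotonic) cone of nonincreasing vectors in `ℝⁿ`. -/
def monoCone (n : ℕ) : Set (EuclideanSpace ℝ (Fin n)) :=
  {x | ∀ i j : Fin n, i ≤ j → x j ≤ x i}

/-- `p` is an isotonic projection of `y` onto the monotone cone. -/
def IsIsoProj {n : ℕ} (y p : EuclideanSpace ℝ (Fin n)) : Prop :=
  p ∈ monoCone n ∧ ∀ w ∈ monoCone n, ‖y - p‖ ≤ ‖y - w‖

lemma isoProj_top_ge {n : ℕ} (hn : 0 < n) (v p : EuclideanSpace ℝ (Fin n))
    (h : IsIsoProj v p) : v ⟨0, hn⟩ ≤ p ⟨0, hn⟩ := by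
  by_contra hlt
  push_neg at hlt
  set i0 : Fin n := ⟨0, hn⟩ with hi0
  have hle0 : ∀ i : Fin n, i0 ≤ i := fun i => Fin.mk_le_of_le_val (Nat.zero_le _)
  set w : EuclideanSpace ℝ (Fin n) := WithLp.toLp 2 (Function.update p i0 (v i0)) with hw
  have hwmem : w ∈ monoCone n := by
    intro i j hij
    by_cases hj : j = i0
    · have hi : i = i0 := le_antisymm (hj ▸ hij) (hle0 i)
      rw [hi, hj]
    · have hwj : w j = p j := Function.update_of_ne hj _ _
      by_cases hi : i = i0
      · have : w i = v i0 := by rw [hw, hi]; exact Function.update_self (f := p.ofLp) i0 (v i0)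
        rw [this, hwj]
        exact le_trans (h.1 i0 j (hle0 j)) (le_of_lt hlt)
      · have hwi : w i = p i := Function.update_of_ne hi _ _
        rw [hwi, hwj]; exact h.1 i j hij
  have hnorm : ‖v - w‖ < ‖v - p‖ := by
    have hsum : ∑ i, (v i - w i) ^ 2 < ∑ i, (v i - p i) ^ 2 := by
      apply Finset.sum_lt_sum
      · intro i _
        by_cases hi : i = i0
        · have : w i = v i0 := by rw [hw, hi]; exact Function.update_self (f := p.ofLp) i0 (v i0)
          rw [this, hi]
          simp [sq_nonneg]
        · have : w i = p i := by rw [hw]; exact Function.update_of_ne hi _ _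
          rw [this]
      · refine ⟨i0, Finset.mem_univ _, ?_⟩
        have hwi0 : w i0 = v i0 := by rw [hw]; exact Function.update_self (f := p.ofLp) i0 (v i0)
        rw [hwi0, sub_self]
        have hne : v i0 - p i0 ≠ 0 := sub_ne_zero.mpr (ne_of_gt hlt)
        have := pow_pos (abs_pos.mpr hne) 2
        rw [← sq_abs]
        simpa using this
    have h1 : ‖v - w‖ = Real.sqrt (∑ i, (v i - w i) ^ 2) := by
      rw [EuclideanSpace.norm_eq]
      congr 1; apply Finset.sum_congr rfl; intro i _
      simp [PiLp.sub_apply, Real.norm_eq_abs, sq_abs]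
    have h2 : ‖v - p‖ = Real.sqrt (∑ i, (v i - p i) ^ 2) := by
      rw [EuclideanSpace.norm_eq]
      congr 1; apply Finset.sum_congr rfl; intro i _
      simp [PiLp.sub_apply, Real.norm_eq_abs, sq_abs]
    rw [h1, h2]
    exact Real.sqrt_lt_sqrt (Finset.sum_nonneg fun i _ => sq_nonneg _) hsum
  exact absurd (h.2 w hwmem) (not_le.mpr hnorm)

/-- With quota one, the expected utility of the isotonically adjusted top score is
at least the expected utility of the raw top score, for any nondecreasing utility. -/
theorem expected_utility_of_adjusted_top_score_ge_raw
    {n : ℕ} (hn : 0 < n) {Ω : Type*} [MeasurableSpace Ω]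
    (μ : Measure Ω) [IsProbabilityMeasure μ]
    (y : Ω → EuclideanSpace ℝ (Fin n))
    (P : EuclideanSpace ℝ (Fin n) → EuclideanSpace ℝ (Fin n))
    (hP : ∀ v, IsIsoProj v (P v))
    (U : ℝ → ℝ) (hU : Monotone U)
    (hint_raw : Integrable (fun ω => U (y ω ⟨0, hn⟩)) μ)
    (hint_adj : Integrable (fun ω => U (P (y ω) ⟨0, hn⟩)) μ) :
    ∫ ω, U (y ω ⟨0, hn⟩) ∂μ ≤ ∫ ω, U (P (y ω) ⟨0, hn⟩) ∂μ := by
  exact integral_mono hint_raw hint_adj fun ω =>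
    hU (isoProj_top_ge hn (y ω) (P (y ω)) (hP (y ω)))
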